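/- For integers n ≥ 2 and k, the word Y = (τ_{k+n-1}···τ_{k+1}τ_k) as a composition of toggles on labelings of any graph G with n vertices (indices modulo n) equals TPro_β where β is the acyclic orientation of Cycle_n with unique source k and unique sink k-1 (equivalently, with each edge {i, i+1} ≠ {k-1, k} oriented from i to i+1 and the edge {k-1, k} oriented from k to k-1). Specialization criterion: if Y is a word in which each toggle τ_1,...,τ_n appears exactly once and, for every suffix X of Y and every arrow a → b of an acyclic orientation β of Cycle_n, the count of τ_a in X minus the count of τ_b in X lies in {0,1}, then Y = TPro_β as a permutation of Λ_G. -/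

import Mathlib

open scoped Classical

noncomputable def toggle {V : Type*} {n : ℕ} (G : SimpleGraph V) (i : ZMod n)
    (σ : V ≃ ZMod n) : V ≃ ZMod n :=
  if G.Adj (σ.symm i) (σ.symm (i + 1)) then σ else σ.trans (Equiv.swap i (i + 1))

noncomputable def applyToggles {V : Type*} {n : ℕ} (G : SimpleGraph V)
    (L : List (ZMod n)) (σ : V ≃ ZMod n) : V ≃ ZMod n :=
  L.foldl (fun τ i => toggle G i τ) σ

noncomputable def tpro {V : Type*} {n : ℕ} (G : SimpleGraph V) (π : Fin n ≃ ZMod n)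
    (σ : V ≃ ZMod n) : V ≃ ZMod n :=
  applyToggles G (List.ofFn fun k => π k) σ

def cycShift {V : Type*} {n : ℕ} (σ : V ≃ ZMod n) : V ≃ ZMod n :=
  σ.trans (Equiv.addRight (1 : ZMod n))

noncomputable def broList {n : ℕ} (B : Finset (ZMod n)) (c : ZMod n) : List (ZMod n) :=
  ((List.range n).map (fun j => c + 1 + (j : ZMod n))).filter (· ∈ B)

noncomputable def cycBro {V : Type*} {n : ℕ} (G : SimpleGraph V) (B : Finset (ZMod n))
    (c : ZMod n) (σ : V ≃ ZMod n) : V ≃ ZMod n :=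
  cycShift (applyToggles G (broList B c) σ)

def linExt {n : ℕ} (o : ZMod n → Bool) (π : Fin n ≃ ZMod n) : Prop :=
  ∀ a : ZMod n, if o a then π.symm a < π.symm (a + 1) else π.symm (a + 1) < π.symm a

section AuxLemmas
open List

section ListAux
variable {α : Type*} [DecidableEq α]

lemma pair_sublist_iff {l : List α} (h : l.Nodup) {i j : α} (hi : i ∈ l) (hj : j ∈ l)
    (hne : i ≠ j) : [i, j] <+ l ↔ l.idxOf i < l.idxOf j := by
  induction l with
  | nil => simp at hi
  | cons a t ih =>
    rcases List.nodup_cons.mp h with ⟨ha, ht⟩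
    by_cases hai : a = i
    · subst hai
      have hjt : j ∈ t := by
        rcases List.mem_cons.mp hj with h' | h'
        · exact absurd h'.symm hne
        · exact h'
      constructor
      · intro _
        rw [List.idxOf_cons_self, List.idxOf_cons_ne _ hne]
        exact Nat.succ_pos _
      · intro _
        exact List.cons_sublist_cons.mpr (List.singleton_sublist.mpr hjt)
    · by_cases haj : a = j
      · subst haj
        constructor
        · intro hs
          exfalso
          rcases List.sublist_cons_iff.mp hs with hs' | ⟨l', hl', _⟩
          · exact ha (hs'.subset (by simp))
          · injection hl' with h1 _; exact hne h1
        · intro hlt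
          rw [List.idxOf_cons_self] at hlt
          omega
      · have hit : i ∈ t := by
          rcases List.mem_cons.mp hi with h' | h'
          · exact absurd h'.symm hai
          · exact h'
        have hjt : j ∈ t := by
          rcases List.mem_cons.mp hj with h' | h'
          · exact absurd h'.symm haj
          · exact h'
        rw [List.idxOf_cons_ne _ hai, List.idxOf_cons_ne _ haj, Nat.succ_lt_succ_iff, ← ih ht hit hjt]
        constructor
        · intro hs
          rcases List.sublist_cons_iff.mp hs with hs' | ⟨l', hl', _⟩
          · exact hs'
          · exfalso; injection hl' with h1 _; exact hai h1.symm
        · intro hs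
          exact hs.cons a

lemma not_pair_sublist_both {l : List α} (h : l.Nodup) {i j : α} (hne : i ≠ j)
    (h1 : [i, j] <+ l) (h2 : [j, i] <+ l) : False := by
  have hi : i ∈ l := h1.subset (by simp)
  have hj : j ∈ l := h1.subset (by simp)
  have t1 := (pair_sublist_iff h hi hj hne).mp h1
  have t2 := (pair_sublist_iff h hj hi hne.symm).mp h2
  omega

lemma nodup_indexOf_getElem {l : List α} (h : l.Nodup) (k : ℕ) (hk : k < l.length) :
    l.idxOf l[k] = k := by
  have hm : l[k] ∈ l := List.getElem_mem hk
  have h1 : l.idxOf l[k] < l.length := List.idxOf_lt_length_iff.mpr hm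
  have := List.getElem_idxOf (x := l[k]) (xs := l) h1
  exact (h.getElem_inj_iff).mp this

lemma indexOf_lt_of_mem_take {l : List α} {i : α} {k : ℕ} (h : i ∈ l.take k) :
    l.idxOf i < k := by
  induction l generalizing k with
  | nil => simp at h
  | cons a t ih =>
    cases k with
    | zero => simp at h
    | succ k =>
      simp only [List.take_succ_cons, List.mem_cons] at h
      by_cases hai : a = i
      · subst hai; rw [List.idxOf_cons_self]; omega
      · rcases h with h | h
        · exact absurd h.symm hai
        · rw [List.idxOf_cons_ne _ hai]
          exact Nat.succ_lt_succ (ih h)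

lemma indexOf_lt_of_counts {l : List α} {i j : α} (hne : i ≠ j)
    (hi : i ∈ l) (hj : j ∈ l)
    (h : ∀ m, (l.take m).count j ≤ (l.take m).count i) :
    l.idxOf i < l.idxOf j := by
  set m := l.idxOf j with hm
  have hml : m < l.length := List.idxOf_lt_length_iff.mpr hj
  have hgm : l[m] = j := List.getElem_idxOf hml
  have hjt : j ∈ l.take (m + 1) := by
    have h3 : (l.take (m + 1))[m]'(by simp; omega) = l[m] := List.getElem_take ..
    have := List.getElem_mem (l := l.take (m+1)) (n := m) (by simp; omega)
    rwa [h3, hgm] at this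
  have hcj : 0 < (l.take (m + 1)).count j := List.count_pos_iff.mpr hjt
  have hci : 0 < (l.take (m + 1)).count i := lt_of_lt_of_le hcj (h (m + 1))
  have hit : i ∈ l.take (m + 1) := List.count_pos_iff.mp hci
  have h1 : l.idxOf i < m + 1 := indexOf_lt_of_mem_take hit
  have h2 : l.idxOf i ≠ m := by
    intro hEq
    have h4 : l[l.idxOf i]'(by omega) = i := List.getElem_idxOf (by omega)
    simp only [hEq] at h4
    exact hne (h4.symm.trans hgm)
  omega

lemma perm_of_nodup_mem {l1 l2 : List α} (h1 : l1.Nodup) (h2 : l2.Nodup)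
    (h : ∀ a, a ∈ l1 ↔ a ∈ l2) : l1.Perm l2 := by
  rw [List.perm_iff_count]
  intro a
  by_cases ha : a ∈ l1
  · rw [List.count_eq_one_of_mem h1 ha, List.count_eq_one_of_mem h2 ((h a).mp ha)]
  · rw [List.count_eq_zero.mpr ha, List.count_eq_zero.mpr (fun hm => ha ((h a).mpr hm))]

end ListAux

section Toggle
variable {V : Type*} {n : ℕ} (G : SimpleGraph V)

lemma applyToggles_cons (x : ZMod n) (L : List (ZMod n)) (σ : V ≃ ZMod n) :
    applyToggles G (x :: L) σ = applyToggles G L (toggle G x σ) := rfl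

lemma swap_trans_comm {i j : ZMod n} (h1 : i ≠ j) (h2 : i ≠ j + 1) (h3 : j ≠ i + 1)
    (h4 : i + 1 ≠ j + 1) :
    (Equiv.swap j (j + 1)).trans (Equiv.swap i (i + 1)) =
      (Equiv.swap i (i + 1)).trans (Equiv.swap j (j + 1)) := by
  have hd : (Equiv.swap i (i + 1)).Disjoint (Equiv.swap j (j + 1)) := by
    intro x
    by_cases hx : x = i ∨ x = i + 1
    · right
      rcases hx with rfl | rfl
      · exact Equiv.swap_apply_of_ne_of_ne h1 h2
      · exact Equiv.swap_apply_of_ne_of_ne (fun h => h3 h.symm) h4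
    · push_neg at hx
      left
      exact Equiv.swap_apply_of_ne_of_ne hx.1 hx.2
  have hc := hd.commute
  calc (Equiv.swap j (j + 1)).trans (Equiv.swap i (i + 1))
      = Equiv.swap i (i + 1) * Equiv.swap j (j + 1) := rfl
    _ = Equiv.swap j (j + 1) * Equiv.swap i (i + 1) := hc
    _ = (Equiv.swap i (i + 1)).trans (Equiv.swap j (j + 1)) := rfl

lemma toggle_comm {i j : ZMod n} (h1 : i ≠ j) (h2 : i ≠ j + 1) (h3 : j ≠ i + 1)
    (σ : V ≃ ZMod n) : toggle G i (toggle G j σ) = toggle G j (toggle G i σ) := by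
  have h4 : i + 1 ≠ j + 1 := fun h => h1 (by
    have := congrArg (· - 1) h; simpa using this)
  have hsi : ∀ σ' : V ≃ ZMod n, (σ'.trans (Equiv.swap j (j + 1))).symm i = σ'.symm i := by
    intro σ'
    simp [Equiv.symm_trans_apply, Equiv.symm_swap, Equiv.swap_apply_of_ne_of_ne h1 h2]
  have hsi1 : ∀ σ' : V ≃ ZMod n, (σ'.trans (Equiv.swap j (j + 1))).symm (i + 1) =
      σ'.symm (i + 1) := by
    intro σ'
    simp [Equiv.symm_trans_apply, Equiv.symm_swap,
      Equiv.swap_apply_of_ne_of_ne (fun h => h3 h.symm) h4]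
  have hsj : ∀ σ' : V ≃ ZMod n, (σ'.trans (Equiv.swap i (i + 1))).symm j = σ'.symm j := by
    intro σ'
    simp [Equiv.symm_trans_apply, Equiv.symm_swap,
      Equiv.swap_apply_of_ne_of_ne (fun h => h1 h.symm) h3]
  have hsj1 : ∀ σ' : V ≃ ZMod n, (σ'.trans (Equiv.swap i (i + 1))).symm (j + 1) =
      σ'.symm (j + 1) := by
    intro σ'
    simp [Equiv.symm_trans_apply, Equiv.symm_swap,
      Equiv.swap_apply_of_ne_of_ne (fun h => h2 h.symm) (fun h => h4 h.symm)]
  by_cases ci : G.Adj (σ.symm i) (σ.symm (i + 1)) <;>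
    by_cases cj : G.Adj (σ.symm j) (σ.symm (j + 1))
  · have ej : toggle G j σ = σ := by simp [toggle, cj]
    have ei : toggle G i σ = σ := by simp [toggle, ci]
    rw [ej, ei, ej]
  · have ej : toggle G j σ = σ.trans (Equiv.swap j (j + 1)) := by simp [toggle, cj]
    have ei : toggle G i σ = σ := by simp [toggle, ci]
    rw [ej, ei, ej]
    simp only [toggle]
    rw [hsi σ, hsi1 σ, if_pos ci]
  · have ej : toggle G j σ = σ := by simp [toggle, cj]
    have ei : toggle G i σ = σ.trans (Equiv.swap i (i + 1)) := by simp [toggle, ci]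
    rw [ej, ei]
    simp only [toggle]
    rw [hsj σ, hsj1 σ, if_pos cj]
  · have ej : toggle G j σ = σ.trans (Equiv.swap j (j + 1)) := by simp [toggle, cj]
    have ei : toggle G i σ = σ.trans (Equiv.swap i (i + 1)) := by simp [toggle, ci]
    rw [ej, ei]
    have ei2 : toggle G i (σ.trans (Equiv.swap j (j + 1))) =
        (σ.trans (Equiv.swap j (j + 1))).trans (Equiv.swap i (i + 1)) := by
      simp only [toggle]
      rw [hsi σ, hsi1 σ, if_neg ci]
    have ej2 : toggle G j (σ.trans (Equiv.swap i (i + 1))) =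
        (σ.trans (Equiv.swap i (i + 1))).trans (Equiv.swap j (j + 1)) := by
      simp only [toggle]
      rw [hsj σ, hsj1 σ, if_neg cj]
    rw [ei2, ej2, Equiv.trans_assoc, Equiv.trans_assoc, swap_trans_comm h1 h2 h3 h4]

lemma applyToggles_move (x : ZMod n) (A B : List (ZMod n)) (σ : V ≃ ZMod n)
    (hA : ∀ a ∈ A, a ≠ x ∧ a ≠ x + 1 ∧ x ≠ a + 1) :
    applyToggles G (A ++ x :: B) σ = applyToggles G (A ++ B) (toggle G x σ) := by
  induction A generalizing σ with
  | nil => rfl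
  | cons a A ih =>
    obtain ⟨hx1, hx2, hx3⟩ := hA a (List.mem_cons_self)
    calc applyToggles G ((a :: A) ++ x :: B) σ
        = applyToggles G (A ++ x :: B) (toggle G a σ) := rfl
      _ = applyToggles G (A ++ B) (toggle G x (toggle G a σ)) :=
          ih _ (fun b hb => hA b (List.mem_cons_of_mem a hb))
      _ = applyToggles G (A ++ B) (toggle G a (toggle G x σ)) := by
          rw [toggle_comm G (fun h => hx1 h.symm) hx3 hx2]
      _ = applyToggles G ((a :: A) ++ B) (toggle G x σ) := rfl

end Toggle

def Compat {n : ℕ} (o : ZMod n → Bool) (L : List (ZMod n)) : Prop :=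
  ∀ i : ZMod n, i ∈ L → (i + 1) ∈ L →
    (o i = true → [i, i + 1] <+ L) ∧ (o i = false → [i + 1, i] <+ L)

lemma compat_of_eq_filter {n : ℕ} {o : ZMod n → Bool} {l : List (ZMod n)} (hl : Compat o l)
    (x : ZMod n) {l' : List (ZMod n)} (h : l' = l.filter (fun y => y ≠ x)) :
    Compat o l' := by
  intro i hi hi1
  have hmem : ∀ y ∈ l', y ∈ l ∧ y ≠ x := by
    intro y hy
    rw [h, List.mem_filter] at hy
    exact ⟨hy.1, by simpa using hy.2⟩
  obtain ⟨hil, hix⟩ := hmem i hi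
  obtain ⟨hi1l, hi1x⟩ := hmem (i + 1) hi1
  have key : ∀ s : List (ZMod n), s <+ l → (∀ y ∈ s, y ≠ x) → s <+ l' := by
    intro s hs hsx
    have : s.filter (fun y => y ≠ x) = s := List.filter_eq_self.mpr (fun y hy => by
      simpa using hsx y hy)
    rw [h, ← this]
    exact hs.filter _
  refine ⟨fun ho => ?_, fun ho => ?_⟩
  · refine key _ ((hl i hil hi1l).1 ho) (fun y hy => ?_)
    simp only [List.mem_cons, List.not_mem_nil, or_false] at hy
    rcases hy with rfl | rfl
    exacts [hix, hi1x]
  · refine key _ ((hl i hil hi1l).2 ho) (fun y hy => ?_)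
    simp only [List.mem_cons, List.not_mem_nil, or_false] at hy
    rcases hy with rfl | rfl
    exacts [hi1x, hix]

lemma key_lemma {V : Type*} {n : ℕ} (G : SimpleGraph V)
    (hone : ∀ i : ZMod n, i + 1 ≠ i) (o : ZMod n → Bool) :
    ∀ (M L : List (ZMod n)), L.Perm M → M.Nodup → Compat o L → Compat o M →
      ∀ σ : V ≃ ZMod n, applyToggles G L σ = applyToggles G M σ := by
  intro M
  induction M with
  | nil =>
    intro L hp _ _ _ σ
    rw [List.perm_nil.mp hp]
  | cons x M' ih =>
    intro L hp hndM hcL hcM σ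
    have hndL : L.Nodup := hp.nodup_iff.mpr hndM
    have hxL : x ∈ L := hp.mem_iff.mpr (List.mem_cons_self)
    obtain ⟨A, B, rfl⟩ := List.append_of_mem hxL
    have hnd2 : (x :: (A ++ B)).Nodup := List.nodup_middle.mp hndL
    have hxAB : x ∉ A ++ B := (List.nodup_cons.mp hnd2).1
    have hndAB : (A ++ B).Nodup := (List.nodup_cons.mp hnd2).2
    have hxM' : x ∉ M' := (List.nodup_cons.mp hndM).1
    have hndM' : M'.Nodup := (List.nodup_cons.mp hndM).2
    -- every element of A is non-adjacent to x
    have hA : ∀ a ∈ A, a ≠ x ∧ a ≠ x + 1 ∧ x ≠ a + 1 := by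
      intro a ha
      have haL : a ∈ A ++ x :: B := List.mem_append_left _ ha
      have haM : a ∈ x :: M' := hp.mem_iff.mp haL
      have hax : a ≠ x := fun h => hxAB (h ▸ List.mem_append_left _ ha)
      have haM' : a ∈ M' := by
        rcases List.mem_cons.mp haM with h | h
        · exact absurd h hax
        · exact h
      -- [a, x] <+ L
      have haxL : [a, x] <+ A ++ x :: B :=
        List.Sublist.append (List.singleton_sublist.mpr ha)
          (List.singleton_sublist.mpr (List.mem_cons_self))
      -- [x, a] <+ M
      have hxaM : [x, a] <+ x :: M' :=
        List.cons_sublist_cons.mpr (List.singleton_sublist.mpr haM')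
      refine ⟨hax, fun hax1 => ?_, fun hxa1 => ?_⟩
      · -- a = x + 1
        subst hax1
        have hx1L : x + 1 ∈ A ++ x :: B := haL
        cases ho : o x with
        | true =>
          have := (hcL x hxL hx1L).1 ho
          exact not_pair_sublist_both hndL (fun h => hone x h.symm) this haxL
        | false =>
          have := (hcM x (List.mem_cons_self) haM).2 ho
          exact not_pair_sublist_both hndM (hone x) this hxaM
      · -- x = a + 1
        have ha1L : a + 1 ∈ A ++ x :: B := hxa1 ▸ hxL
        have ha1M : a + 1 ∈ x :: M' := hxa1 ▸ List.mem_cons_self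
        cases ho : o a with
        | true =>
          have := (hcM a haM ha1M).1 ho
          rw [← hxa1] at this
          exact not_pair_sublist_both hndM hax this hxaM
        | false =>
          have := (hcL a haL ha1L).2 ho
          rw [← hxa1] at this
          exact not_pair_sublist_both hndL hax haxL this
    have hfilterL : (A ++ B) = (A ++ x :: B).filter (fun y => y ≠ x) := by
      have hAf : A.filter (fun y => y ≠ x) = A := List.filter_eq_self.mpr (fun y hy => by
        simp only [decide_eq_true_eq]
        exact fun h => hxAB (h ▸ List.mem_append_left _ hy))
      have hBf : B.filter (fun y => y ≠ x) = B := List.filter_eq_self.mpr (fun y hy => by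
        simp only [decide_eq_true_eq]
        exact fun h => hxAB (h ▸ List.mem_append_right _ hy))
      rw [List.filter_append, hAf, List.filter_cons_of_neg (by simp), hBf]
    have hfilterM : M' = (x :: M').filter (fun y => y ≠ x) := by
      have hMf : M'.filter (fun y => y ≠ x) = M' := List.filter_eq_self.mpr (fun y hy => by
        simp only [decide_eq_true_eq]
        exact fun h => hxM' (h ▸ hy))
      rw [List.filter_cons_of_neg (by simp), hMf]
    have hpAB : (A ++ B).Perm M' := by
      have h1 : (A ++ x :: B).Perm (x :: (A ++ B)) := List.perm_middle
      exact (List.perm_cons x).mp (h1.symm.trans hp)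
    calc applyToggles G (A ++ x :: B) σ = applyToggles G (A ++ B) (toggle G x σ) :=
          applyToggles_move G x A B σ hA
      _ = applyToggles G M' (toggle G x σ) :=
          ih _ hpAB hndM' (compat_of_eq_filter hcL x hfilterL)
            (compat_of_eq_filter hcM x hfilterM) _
      _ = applyToggles G (x :: M') σ := rfl

section Final
variable {n : ℕ}

lemma ofFn_nodup (π : Fin n ≃ ZMod n) : (List.ofFn fun k => π k).Nodup :=
  List.nodup_ofFn.mpr π.injective

lemma ofFn_mem (π : Fin n ≃ ZMod n) (a : ZMod n) : a ∈ List.ofFn fun k => π k := by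
  rw [List.mem_ofFn]
  exact ⟨π.symm a, π.apply_symm_apply a⟩

lemma ofFn_indexOf (π : Fin n ≃ ZMod n) (a : Fin n) :
    (List.ofFn fun k => π k).idxOf (π a) = (a : ℕ) := by
  have hlen : (List.ofFn fun k => π k).length = n := List.length_ofFn
  have hk : (a : ℕ) < (List.ofFn fun k => π k).length := by rw [hlen]; exact a.2
  have hg : (List.ofFn fun k => π k)[(a : ℕ)] = π a := by
    rw [List.getElem_ofFn]
  have := nodup_indexOf_getElem (ofFn_nodup π) _ hk
  rwa [hg] at this

lemma compat_ofFn (hone : ∀ i : ZMod n, i + 1 ≠ i) (o : ZMod n → Bool) (π : Fin n ≃ ZMod n)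
    (h : linExt o π) : Compat o (List.ofFn fun k => π k) := by
  intro i hi hi1
  have hio : (List.ofFn fun k => π k).idxOf i = (π.symm i : ℕ) := by
    have := ofFn_indexOf π (π.symm i)
    rwa [π.apply_symm_apply] at this
  have hi1o : (List.ofFn fun k => π k).idxOf (i + 1) = (π.symm (i + 1) : ℕ) := by
    have := ofFn_indexOf π (π.symm (i + 1))
    rwa [π.apply_symm_apply] at this
  have hlin := h i
  constructor
  · intro ho
    rw [ho] at hlin
    simp only [if_true] at hlin
    rw [pair_sublist_iff (ofFn_nodup π) hi hi1 (fun hh => hone i hh.symm), hio, hi1o]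
    exact hlin
  · intro ho
    rw [ho] at hlin
    simp only [Bool.false_eq_true, if_false] at hlin
    rw [pair_sublist_iff (ofFn_nodup π) hi1 hi (hone i), hio, hi1o]
    exact hlin

end Final

lemma flatMap_single {α β : Type*} (f : α → β) (l : List α) :
    (l.flatMap fun a => [f a]) = l.map f := by
  induction l with
  | nil => rfl
  | cons a t ih => simp [List.flatMap_cons, ih]

end AuxLemmas

theorem stmt19 {V : Type*} [Fintype V] (n : ℕ) (hn : 2 ≤ n) (hcard : Fintype.card V = n)
    (G : SimpleGraph V) :
    -- Part (a): the word τ_{k+n-1} ⋯ τ_{k+1} τ_k equals TPro_β, where β is the acyclic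
    -- orientation of Cycle_n with unique source k and unique sink k-1.
    (∀ (k : ZMod n) (π : Fin n ≃ ZMod n),
        linExt (fun i : ZMod n => decide (i ≠ k - 1)) π →
        ∀ σ : V ≃ ZMod n,
          applyToggles G ((List.range n).map (fun j => k + (j : ZMod n))) σ = tpro G π σ) ∧
    -- Part (b): specialization criterion.  If each toggle appears exactly once in the word
    -- `L` (listed in order of application, so suffixes of the word are prefixes of `L`) and
    -- for every suffix and every arrow a → b of β the count of τ_a minus the count of τ_b
    -- lies in {0, 1}, then the word equals TPro_β.
    ∀ (o : ZMod n → Bool) (π : Fin n ≃ ZMod n), linExt o π →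
      ∀ L : List (ZMod n), (∀ a : ZMod n, L.count a = 1) →
        (∀ (m : ℕ) (i : ZMod n),
          (o i = true →
            (L.take m).count (i + 1) ≤ (L.take m).count i ∧
              (L.take m).count i ≤ (L.take m).count (i + 1) + 1) ∧
          (o i = false →
            (L.take m).count i ≤ (L.take m).count (i + 1) ∧
              (L.take m).count (i + 1) ≤ (L.take m).count i + 1)) →
        ∀ σ : V ≃ ZMod n, applyToggles G L σ = tpro G π σ := by
  haveI : NeZero n := ⟨by omega⟩
  have hone : ∀ i : ZMod n, i + 1 ≠ i := by
    intro i h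
    have h1 : ((1 : ℕ) : ZMod n) = 0 := by
      have := congrArg (· - i) h
      simpa [add_comm] using this
    rw [ZMod.natCast_eq_zero_iff] at h1
    exact absurd (Nat.le_of_dvd one_pos h1) (by omega)
  constructor
  · -- Part (a)
    intro k π hπ σ
    have hLeq : ((List.range n).map (fun j => k + (j : ZMod n)) : List (ZMod n)) =
        List.map (fun j : ℕ => k + (j : ZMod n)) (List.range n) := by
      show List.map _ ((List.range n).flatMap fun a => [((a : ℕ) : ZMod n)]) = _
      rw [flatMap_single, List.map_map]
      rfl
    rw [hLeq]
    set o : ZMod n → Bool := fun i : ZMod n => decide (i ≠ k - 1) with ho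
    set L : List (ZMod n) := List.map (fun j : ℕ => k + (j : ZMod n)) (List.range n) with hLdef
    have hlen : L.length = n := by simp [hLdef]
    have hget : ∀ (j : ℕ) (hj : j < n), L[j]'(by omega) = k + (j : ZMod n) := by
      intro j hj
      simp [hLdef]
    have hndL : L.Nodup := by
      refine List.Nodup.map_on ?_ (List.nodup_range)
      intro a ha b hb hab
      rw [List.mem_range] at ha hb
      have : ((a : ZMod n)) = (b : ZMod n) := by
        have := congrArg (· - k) hab
        simpa [add_comm] using this
      have := congrArg ZMod.val this
      rwa [ZMod.val_cast_of_lt ha, ZMod.val_cast_of_lt hb] at this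
    have hmemL : ∀ i : ZMod n, i ∈ L := by
      intro i
      rw [hLdef, List.mem_map]
      refine ⟨(i - k).val, List.mem_range.mpr (ZMod.val_lt _), ?_⟩
      rw [ZMod.natCast_rightInverse (i - k)]
      ring
    have hidx : ∀ i : ZMod n, L.idxOf i = (i - k).val := by
      intro i
      have hv : (i - k).val < n := ZMod.val_lt _
      have := nodup_indexOf_getElem hndL ((i - k).val) (by omega)
      rw [hget _ hv] at this
      rw [ZMod.natCast_rightInverse (i - k)] at this
      rwa [show k + (i - k) = i by ring] at this
    have hcL : Compat o L := by
      intro i hi hi1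
      constructor
      · intro hoi
        have hik : i ≠ k - 1 := by simpa [ho] using hoi
        rw [pair_sublist_iff hndL hi hi1 (fun h => hone i h.symm), hidx, hidx]
        have hne : (i - k).val ≠ n - 1 := by
          intro h
          apply hik
          have : i - k = ((n - 1 : ℕ) : ZMod n) := by
            rw [← h, ZMod.natCast_rightInverse (i - k)]
          have h2 : ((n - 1 : ℕ) : ZMod n) = -1 := by
            have : ((n : ℕ) : ZMod n) = 0 := ZMod.natCast_self n
            push_cast [Nat.cast_sub (by omega : 1 ≤ n)]
            rw [this]; ring
          have h3 : i - k = -1 := by rw [this, h2]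
          have := congrArg (· + k) h3
          simp at this
          rw [this]; ring
        have hstep : i + 1 - k = (i - k) + 1 := by ring
        rw [hstep]
        have hvlt : (i - k).val < n := ZMod.val_lt _
        have : ((i - k) + 1).val = (i - k).val + 1 := by
          have e : (i - k) + 1 = (((i - k).val + 1 : ℕ) : ZMod n) := by
            push_cast
            rw [ZMod.natCast_rightInverse (i - k)]
          rw [e, ZMod.val_cast_of_lt (by omega)]
        omega
      · intro hoi
        have hik : i = k - 1 := by simpa [ho] using hoi
        subst hik
        rw [pair_sublist_iff hndL hi1 hi (hone _), hidx, hidx]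
        have h1 : k - 1 + 1 - k = 0 := by ring
        have h2 : k - 1 - k = -1 := by ring
        rw [h1, h2]
        have hv0 : (0 : ZMod n).val = 0 := ZMod.val_zero
        have hvm : (-1 : ZMod n).val = n - 1 := by
          have : (-1 : ZMod n) = ((n - 1 : ℕ) : ZMod n) := by
            push_cast [Nat.cast_sub (by omega : 1 ≤ n)]
            rw [ZMod.natCast_self]; ring
          rw [this, ZMod.val_cast_of_lt (by omega)]
        rw [hv0, hvm]
        omega
    have hM := compat_ofFn hone o π hπ
    have hperm : L.Perm (List.ofFn fun k => π k) :=
      perm_of_nodup_mem hndL (ofFn_nodup π) (fun a => by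
        simp only [hmemL a, ofFn_mem π a])
    exact key_lemma G hone o _ L hperm (ofFn_nodup π) hcL hM σ
  · -- Part (b)
    intro o π hπ L hcount hcond σ
    have hndL : L.Nodup := List.nodup_iff_count_le_one.mpr (fun a => le_of_eq (hcount a))
    have hmemL : ∀ a : ZMod n, a ∈ L := fun a =>
      List.count_pos_iff.mp (by rw [hcount a]; omega)
    have hcL : Compat o L := by
      intro i hi hi1
      constructor
      · intro hoi
        rw [pair_sublist_iff hndL hi hi1 (fun h => hone i h.symm)]
        exact indexOf_lt_of_counts (fun h => hone i h.symm) hi hi1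
          (fun m => ((hcond m i).1 hoi).1)
      · intro hoi
        rw [pair_sublist_iff hndL hi1 hi (hone i)]
        exact indexOf_lt_of_counts (hone i) hi1 hi
          (fun m => ((hcond m i).2 hoi).1)
    have hperm : L.Perm (List.ofFn fun k => π k) :=
      perm_of_nodup_mem hndL (ofFn_nodup π) (fun a => by
        simp only [hmemL a, ofFn_mem π a])
    exact key_lemma G hone o _ L hperm (ofFn_nodup π) hcL (compat_ofFn hone o π hπ) σ
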